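/- For all r ≥ 2 and m ≤ n: the minimal number k such that every k independent n-sets in any K_r-free graph admit a rainbow independent m-set equals the Ramsey number R(r,m). In particular, any R(r,m) independent n-sets in a K_r-free graph have a rainbow independent m-set, and there exist a K_r-free graph and R(r,m)-1 independent n-sets with no rainbow independent m-set. -/

import Mathlib

open SimpleGraph Finset

/-- `S` is an independent set in `G`. -/
def IndepIn {V : Type*} (G : SimpleGraph V) (S : Finset V) : Prop :=
  ∀ u ∈ S, ∀ v ∈ S, ¬ G.Adj u v

/-- The family `I` admits a rainbow independent `m`-set in `G`: `m` distinct pairwise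
non-adjacent vertices, each chosen from a distinct member of the family. -/
def HasRainbowIndep {V ι : Type*} (G : SimpleGraph V) (I : ι → Finset V) (m : ℕ) : Prop :=
  ∃ (j : Fin m → ι) (v : Fin m → V), Function.Injective j ∧ Function.Injective v ∧
    (∀ i, v i ∈ I (j i)) ∧ ∀ i i' : Fin m, i ≠ i' → ¬ G.Adj (v i) (v i')

/-- `G` contains no induced copy of `H`. -/
def IndFree {V W : Type*} (G : SimpleGraph V) (H : SimpleGraph W) : Prop :=
  ¬ ∃ f : W ↪ V, ∀ a b : W, G.Adj (f a) (f b) ↔ H.Adj a b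

/-- `N` vertices suffice to find a clique of size `r` or an independent set of size `m`. -/
def RamseyProp (N r m : ℕ) : Prop :=
  ∀ G : SimpleGraph (Fin N),
    (∃ S : Finset (Fin N), G.IsNClique r S) ∨
    (∃ S : Finset (Fin N), S.card = m ∧ ∀ u ∈ S, ∀ v ∈ S, ¬ G.Adj u v)

/-- The Ramsey number `R(r,m)`. -/
noncomputable def ramseyNum (r m : ℕ) : ℕ := sInf {N | RamseyProp N r m}

lemma ramsey_subset {V : Type*} [DecidableEq V] (G : SimpleGraph V) (A : Finset V)
    {k r m : ℕ} (hk : RamseyProp k r m) (hcard : k ≤ A.card) :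
    (∃ S : Finset V, ↑S ⊆ (A : Set V) ∧ G.IsNClique r S) ∨
    (∃ S : Finset V, S ⊆ A ∧ S.card = m ∧ ∀ u ∈ S, ∀ v ∈ S, ¬ G.Adj u v) := by
  obtain ⟨B, hBA, hB⟩ := A.exists_subset_card_eq hcard
  set e : Fin k → V := fun i => (B.equivFin.symm (Fin.cast hB.symm i) : V) with he
  have hemem : ∀ i, e i ∈ B := fun i => Finset.coe_mem _
  have hinj : Function.Injective e := by
    intro a b hab
    have h2 : B.equivFin.symm (Fin.cast hB.symm a) = B.equivFin.symm (Fin.cast hB.symm b) :=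
      Subtype.ext hab
    have := B.equivFin.symm.injective h2
    exact Fin.cast_injective _ (by exact this)
  rcases hk (G.comap e) with ⟨S, hS⟩ | ⟨S, hSc, hSi⟩
  · left
    refine ⟨S.image e, ?_, ?_, ?_⟩
    · intro x hx
      simp only [coe_image, Set.mem_image, mem_coe] at hx
      obtain ⟨a, _, rfl⟩ := hx
      exact hBA (hemem a)
    · rintro x hx y hy hxy
      simp only [coe_image, Set.mem_image, mem_coe] at hx hy
      obtain ⟨a, ha, rfl⟩ := hx
      obtain ⟨b, hb, rfl⟩ := hy
      exact hS.1 ha hb (fun h => hxy (congrArg e h))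
    · rw [Finset.card_image_of_injective _ hinj, hS.2]
  · right
    refine ⟨S.image e, fun x hx => ?_, ?_, ?_⟩
    · obtain ⟨a, _, rfl⟩ := Finset.mem_image.1 hx
      exact hBA (hemem a)
    · rw [Finset.card_image_of_injective _ hinj, hSc]
    · intro u hu v hv
      obtain ⟨a, ha, rfl⟩ := Finset.mem_image.1 hu
      obtain ⟨b, hb, rfl⟩ := Finset.mem_image.1 hv
      exact hSi a ha b hb
lemma ramseyProp_zero_left (N m : ℕ) : RamseyProp N 0 m :=
  fun _ => Or.inl ⟨∅, by simp [SimpleGraph.isNClique_iff]⟩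
lemma ramseyProp_zero_right (N r : ℕ) : RamseyProp N r 0 :=
  fun _ => Or.inr ⟨∅, by simp⟩
lemma ramsey_step {N₁ N₂ r m : ℕ} (h₁ : RamseyProp N₁ r (m+1)) (h₂ : RamseyProp N₂ (r+1) m) :
    RamseyProp (N₁ + N₂ + 1) (r+1) (m+1) := by
  intro G
  classical
  set v : Fin (N₁ + N₂ + 1) := ⟨0, by omega⟩
  set A : Finset (Fin (N₁ + N₂ + 1)) := G.neighborFinset v with hA
  have hvA : v ∉ A := by simp [hA]
  by_cases hc : N₁ ≤ A.card
  · rcases ramsey_subset G A h₁ hc with ⟨S, hSA, hS⟩ | ⟨S, _, hSc, hSi⟩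
    · left
      refine ⟨insert v S, ?_, ?_⟩
      · rw [Finset.coe_insert]
        refine hS.1.insert (fun b hb _ => ?_)
        have : b ∈ A := hSA hb
        exact (SimpleGraph.mem_neighborFinset G v b).1 this
      · rw [Finset.card_insert_of_notMem (fun h => hvA (hSA h)), hS.2]
    · exact Or.inr ⟨S, hSc, hSi⟩
  · set B : Finset (Fin (N₁ + N₂ + 1)) := Finset.univ \ insert v A with hB
    have hBcard : N₂ ≤ B.card := by
      rw [hB, Finset.card_sdiff_of_subset (Finset.subset_univ _), Finset.card_insert_of_notMem hvA,
        Finset.card_univ, Fintype.card_fin]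
      omega
    rcases ramsey_subset G B h₂ hBcard with ⟨S, _, hS⟩ | ⟨S, hSB, hSc, hSi⟩
    · exact Or.inl ⟨S, hS⟩
    · right
      have hvB : v ∉ B := by simp [hB]
      have hvS : v ∉ S := fun h => hvB (hSB h)
      have hnadj : ∀ w ∈ S, ¬ G.Adj v w := by
        intro w hw hadj
        have : w ∈ B := hSB hw
        rw [hB, Finset.mem_sdiff] at this
        exact this.2 (Finset.mem_insert_of_mem ((SimpleGraph.mem_neighborFinset G v w).2 hadj))
      refine ⟨insert v S, ?_, ?_⟩
      · rw [Finset.card_insert_of_notMem hvS, hSc]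
      · intro x hx y hy
        rcases Finset.mem_insert.1 hx with rfl | hx <;> rcases Finset.mem_insert.1 hy with rfl | hy
        · exact G.loopless.irrefl v
        · exact hnadj y hy
        · exact fun h => hnadj x hx h.symm
        · exact hSi x hx y hy
lemma ramsey_exists (r m : ℕ) : ∃ N, RamseyProp N r m := by
  induction r generalizing m with
  | zero => exact ⟨0, ramseyProp_zero_left 0 m⟩
  | succ r ihr =>
    induction m with
    | zero => exact ⟨0, ramseyProp_zero_right 0 (r+1)⟩
    | succ m ihm =>
      obtain ⟨N₁, h₁⟩ := ihr (m+1)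
      obtain ⟨N₂, h₂⟩ := ihm
      exact ⟨N₁ + N₂ + 1, ramsey_step h₁ h₂⟩
lemma ramseyProp_mono {N N' r m : ℕ} (h : RamseyProp N r m) (hle : N ≤ N') :
    RamseyProp N' r m := by
  intro G
  classical
  have hcard : N ≤ (Finset.univ : Finset (Fin N')).card := by
    rw [Finset.card_univ, Fintype.card_fin]; exact hle
  rcases ramsey_subset G Finset.univ h hcard with ⟨S, _, hS⟩ | ⟨S, _, hSc, hSi⟩
  · exact Or.inl ⟨S, hS⟩
  · exact Or.inr ⟨S, hSc, hSi⟩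
lemma ramseyNum_mem (r m : ℕ) : RamseyProp (ramseyNum r m) r m := by
  obtain ⟨N, hN⟩ := ramsey_exists r m
  exact Nat.sInf_mem (⟨N, hN⟩ : {N | RamseyProp N r m}.Nonempty)
lemma not_ramseyProp_zero {r m : ℕ} (hr : 1 ≤ r) (hm : 1 ≤ m) : ¬ RamseyProp 0 r m := by
  intro h
  rcases h ⊥ with ⟨S, hS⟩ | ⟨S, hSc, _⟩
  · have h2 := hS.2
    have : S.card = 0 := Nat.le_zero.1 ((Finset.card_le_univ S).trans (by simp))
    omega
  · have : S.card = 0 := Nat.le_zero.1 ((Finset.card_le_univ S).trans (by simp))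
    omega
lemma ramseyNum_pos {r m : ℕ} (hr : 1 ≤ r) (hm : 1 ≤ m) : 1 ≤ ramseyNum r m := by
  rcases Nat.eq_zero_or_pos (ramseyNum r m) with h | h
  · exact absurd (h ▸ ramseyNum_mem r m) (not_ramseyProp_zero hr hm)
  · exact h
lemma not_ramseyProp_pred {r m : ℕ} (hr : 1 ≤ r) (hm : 1 ≤ m) :
    ¬ RamseyProp (ramseyNum r m - 1) r m := by
  intro h
  have h1 := ramseyNum_pos hr hm
  have hlt : ramseyNum r m - 1 < ramseyNum r m := by omega
  exact Nat.notMem_of_lt_sInf hlt h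
lemma exists_inj_into {α : Type*} (s : Finset α) {m : ℕ} (h : m ≤ s.card) :
    ∃ e : Fin m → α, Function.Injective e ∧ ∀ k, e k ∈ s := by
  refine ⟨fun k => (s.equivFin.symm (Fin.castLE h k) : α), ?_, fun k => Finset.coe_mem _⟩
  intro a b hab
  have := s.equivFin.symm.injective (Subtype.ext hab)
  exact Fin.castLE_injective h this
lemma lower_bound (r m n : ℕ) (hr : 2 ≤ r) (hm : 1 ≤ m) (hmn : m ≤ n) :
    ∃ (V : Type) (G : SimpleGraph V), G.CliqueFree r ∧
      ∃ I : Fin (ramseyNum r m - 1) → Finset V,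
        (∀ i, (I i).card = n ∧ IndepIn G (I i)) ∧ ¬ HasRainbowIndep G I m := by
  classical
  set N := ramseyNum r m with hN
  have hnp := not_ramseyProp_pred (r := r) (m := m) (by omega) hm
  rw [RamseyProp, not_forall] at hnp
  obtain ⟨H, hH⟩ := hnp
  have hH1 : ¬ ∃ S : Finset (Fin (N-1)), H.IsNClique r S := fun h => hH (Or.inl h)
  have hH2 : ¬ ∃ S : Finset (Fin (N-1)), S.card = m ∧ ∀ u ∈ S, ∀ v ∈ S, ¬ H.Adj u v :=
    fun h => hH (Or.inr h)
  refine ⟨Fin (N-1) × Fin n, H.comap Prod.fst, ?_, fun i => ({i} ×ˢ Finset.univ), ?_, ?_⟩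
  · intro S hS
    apply hH1
    refine ⟨S.image Prod.fst, ?_, ?_⟩
    · rintro a ha b hb hab
      simp only [coe_image, Set.mem_image, mem_coe] at ha hb
      obtain ⟨x, hx, rfl⟩ := ha
      obtain ⟨y, hy, rfl⟩ := hb
      exact hS.1 hx hy (fun h => hab (congrArg Prod.fst h))
    · rw [Finset.card_image_of_injOn, hS.2]
      intro x hx y hy hxy
      by_contra hne
      have hadj : H.Adj x.1 y.1 := hS.1 hx hy hne
      exact hadj.ne hxy
  · intro i
    constructor
    · simp
    · intro u hu v hv hadj
      rw [Finset.mem_product, Finset.mem_singleton] at hu hv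
      have : H.Adj i i := by
        have := hadj
        rw [SimpleGraph.comap_adj, hu.1, hv.1] at this
        exact this
      exact H.loopless.irrefl i this
  · rintro ⟨j, v, hjinj, hvinj, hmem, hnadj⟩
    apply hH2
    have hfst : ∀ k, (v k).1 = j k := by
      intro k
      have := hmem k
      rw [Finset.mem_product, Finset.mem_singleton] at this
      exact this.1
    refine ⟨Finset.univ.image j, ?_, ?_⟩
    · rw [Finset.card_image_of_injective _ hjinj, Finset.card_univ, Fintype.card_fin]
    · intro a ha b hb hadj
      obtain ⟨k, _, rfl⟩ := Finset.mem_image.1 ha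
      obtain ⟨k', _, rfl⟩ := Finset.mem_image.1 hb
      rcases eq_or_ne k k' with rfl | hne
      · exact H.loopless.irrefl _ hadj
      · apply hnadj k k' hne
        rw [SimpleGraph.comap_adj, hfst, hfst]
        exact hadj
lemma upper_bound (r m n : ℕ) (hr : 2 ≤ r) (hm : 1 ≤ m) (hmn : m ≤ n) :
    ∀ (V : Type) (G : SimpleGraph V), G.CliqueFree r →
      ∀ I : Fin (ramseyNum r m) → Finset V,
        (∀ i, (I i).card = n ∧ IndepIn G (I i)) → HasRainbowIndep G I m := by
  intro V G hGfree I hI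
  classical
  have hN1 : 1 ≤ ramseyNum r m := ramseyNum_pos (by omega) hm
  have hV : Nonempty V := by
    have h0 := (hI ⟨0, by omega⟩).1
    have h1 : (I ⟨0, by omega⟩).Nonempty := Finset.card_pos.1 (by omega)
    exact ⟨h1.choose⟩
  obtain ⟨v0⟩ := hV
  set P : Finset (Fin (ramseyNum r m)) → Prop :=
    fun T => ∃ f : Fin (ramseyNum r m) → V, Set.InjOn f ↑T ∧ ∀ i ∈ T, f i ∈ I i with hP
  have hPempty : P ∅ := ⟨fun _ => v0, by simp, by simp⟩
  obtain ⟨T, hTmem, hTmax⟩ := Finset.exists_max_image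
    (Finset.univ.filter P) Finset.card ⟨∅, by simp [hPempty]⟩
  have hT : P T := (Finset.mem_filter.1 hTmem).2
  obtain ⟨f, hfinj, hfmem⟩ := hT
  by_cases hTu : T = Finset.univ
  · -- full injective choice: apply Ramsey to the pulled-back graph
    have hfinj' : Function.Injective f := by
      rw [hTu, Finset.coe_univ] at hfinj
      exact fun a b hab => hfinj (Set.mem_univ a) (Set.mem_univ b) hab
    rcases ramseyNum_mem r m (G.comap f) with ⟨S, hS⟩ | ⟨S, hSc, hSi⟩
    · exfalso
      refine hGfree (S.image f) ⟨?_, ?_⟩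
      · rintro a ha b hb hab
        simp only [coe_image, Set.mem_image, mem_coe] at ha hb
        obtain ⟨x, hx, rfl⟩ := ha
        obtain ⟨y, hy, rfl⟩ := hb
        exact hS.1 hx hy (fun h => hab (congrArg f h))
      · rw [Finset.card_image_of_injective _ hfinj', hS.2]
    · obtain ⟨j, hjinj, hjmem⟩ := exists_inj_into S (le_of_eq hSc.symm)
      have hfmemall : ∀ i, f i ∈ I i := fun i => hfmem i (by rw [hTu]; exact Finset.mem_univ i)
      refine ⟨j, fun k => f (j k), hjinj, hfinj'.comp hjinj, fun k => hfmemall (j k), ?_⟩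
      intro k k' _ hadj
      exact hSi (j k) (hjmem k) (j k') (hjmem k') hadj
  · -- T not full: some set is covered by the chosen representatives
    obtain ⟨i₀, hi₀⟩ : ∃ i, i ∉ T := by
      by_contra h
      push_neg at h
      exact hTu (Finset.eq_univ_iff_forall.2 h)
    have hcov : ∀ x ∈ I i₀, ∃ jx, jx ∈ T ∧ f jx = x := by
      by_contra h
      push_neg at h
      obtain ⟨x, hx, hxne⟩ := h
      have hP' : P (insert i₀ T) := by
        refine ⟨Function.update f i₀ x, ?_, ?_⟩
        · intro a ha b hb heq
          rw [Finset.coe_insert, Set.mem_insert_iff] at ha hb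
          rcases ha with rfl | ha <;> rcases hb with rfl | hb
          · rfl
          · rw [Function.update_self, Function.update_of_ne (fun h => hi₀ (by rw [← h]; exact hb))] at heq
            exact absurd heq.symm (hxne b hb)
          · rw [Function.update_self, Function.update_of_ne (fun h => hi₀ (by rw [← h]; exact ha))] at heq
            exact absurd heq (hxne a ha)
          · rw [Function.update_of_ne (fun h => hi₀ (by rw [← h]; exact ha)),
              Function.update_of_ne (fun h => hi₀ (by rw [← h]; exact hb))] at heq
            exact hfinj ha hb heq
        · intro i hi
          rcases Finset.mem_insert.1 hi with rfl | hi
          · rw [Function.update_self]; exact hx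
          · rw [Function.update_of_ne (fun h => hi₀ (by rw [← h]; exact hi))]
            exact hfmem i hi
      have hle := hTmax (insert i₀ T) (Finset.mem_filter.2 ⟨Finset.mem_univ _, hP'⟩)
      rw [Finset.card_insert_of_notMem hi₀] at hle
      omega
    obtain ⟨e, heinj, hemem⟩ := exists_inj_into (m := m) (I i₀) (show m ≤ (I i₀).card by rw [(hI i₀).1]; exact hmn)
    have hjex : ∀ k : Fin m, ∃ jx, jx ∈ T ∧ f jx = e k := fun k => hcov (e k) (hemem k)
    set j : Fin m → Fin (ramseyNum r m) := fun k => (hjex k).choose with hj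
    have hjT : ∀ k, j k ∈ T := fun k => (hjex k).choose_spec.1
    have hjf : ∀ k, f (j k) = e k := fun k => (hjex k).choose_spec.2
    have hjinj : Function.Injective j := by
      intro a b hab
      apply heinj
      rw [← hjf a, ← hjf b, hab]
    refine ⟨j, e, hjinj, heinj, fun k => by rw [← hjf k]; exact hfmem _ (hjT k), ?_⟩
    intro k k' _ hadj
    exact (hI i₀).2 (e k) (hemem k) (e k') (hemem k') hadj

theorem cliqueFree_rainbow_eq_ramsey (r m n : ℕ) (hr : 2 ≤ r) (hm : 1 ≤ m) (hmn : m ≤ n) :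
    (∀ (V : Type) (G : SimpleGraph V), G.CliqueFree r →
      ∀ I : Fin (ramseyNum r m) → Finset V,
        (∀ i, (I i).card = n ∧ IndepIn G (I i)) → HasRainbowIndep G I m) ∧
    (∃ (V : Type) (G : SimpleGraph V), G.CliqueFree r ∧
      ∃ I : Fin (ramseyNum r m - 1) → Finset V,
        (∀ i, (I i).card = n ∧ IndepIn G (I i)) ∧ ¬ HasRainbowIndep G I m) :=
  ⟨upper_bound r m n hr hm hmn, lower_bound r m n hr hm hmn⟩
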